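/- Let K be a field of characteristic 0 and let S = K[x,y,z] be graded by deg(x)=5, deg(y)=103, deg(z)=169. Then dim_K S_{887} = 6 and [𝔭_K(5,103,169)^{(3)}]_{887} = 0. -/

import Mathlib

open MvPolynomial

noncomputable section

/-- The weight function assigning degrees `a, b, c` to the variables `x, y, z`. -/
def wt (a b c : ℕ) : Fin 3 → ℕ := ![a, b, c]

/-- The `K`-algebra map `K[x,y,z] → K[T]`, `x ↦ T^a`, `y ↦ T^b`, `z ↦ T^c`. -/
def toPoly (K : Type*) [CommRing K] (a b c : ℕ) :
    MvPolynomial (Fin 3) K →ₐ[K] Polynomial K :=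
  aeval ![Polynomial.X ^ a, Polynomial.X ^ b, Polynomial.X ^ c]

/-- The space monomial prime `𝔭_K(a,b,c)`. -/
def pIdeal (K : Type*) [CommRing K] (a b c : ℕ) : Ideal (MvPolynomial (Fin 3) K) :=
  RingHom.ker (toPoly K a b c)

instance pIdeal_isPrime (K : Type*) [Field K] (a b c : ℕ) : (pIdeal K a b c).IsPrime :=
  RingHom.ker_isPrime _

/-- The `n`-th symbolic power `Q^{(n)} = Q^n A_Q ∩ A` of a prime ideal. -/
def symbPow {A : Type*} [CommRing A] (Q : Ideal A) [Q.IsPrime] (n : ℕ) : Ideal A :=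
  Ideal.comap (algebraMap A (Localization.AtPrime Q))
    (Ideal.map (algebraMap A (Localization.AtPrime Q)) (Q ^ n))

/-- The symbolic Rees algebra `A[Qt, Q^{(2)}t^2, …] ⊆ A[t]`. -/
def symbolicRees {A : Type*} [CommRing A] (Q : Ideal A) [Q.IsPrime] :
    Subalgebra A (Polynomial A) :=
  Algebra.adjoin A
    (⋃ n : ℕ, (fun p => Polynomial.C p * Polynomial.X ^ n) '' ((symbPow Q n : Ideal A) : Set A))

/-- The degree-`d` homogeneous component `[J]_d` of an ideal `J ⊆ K[x,y,z]`,
as a `K`-subspace. -/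
def gpiece (K : Type*) [CommRing K] (a b c : ℕ) (J : Ideal (MvPolynomial (Fin 3) K))
    (d : ℕ) : Submodule K (MvPolynomial (Fin 3) K) :=
  (Submodule.restrictScalars K J) ⊓ (weightedHomogeneousSubmodule K (wt a b c) d)

end

noncomputable section StatementAux

lemma exists_mul_mem_of_mem_symbPow {A : Type*} [CommRing A] (Q : Ideal A) [Q.IsPrime]
    {n : ℕ} {f : A} (hf : f ∈ symbPow Q n) : ∃ s ∉ Q, s * f ∈ Q ^ n := by
  rw [symbPow, Ideal.mem_comap,
    IsLocalization.mem_map_algebraMap_iff Q.primeCompl] at hf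
  obtain ⟨⟨⟨a, ha⟩, s⟩, h⟩ := hf
  rw [← map_mul, IsLocalization.eq_iff_exists Q.primeCompl] at h
  obtain ⟨c, hc⟩ := h
  refine ⟨(c : A) * (s : A), (c * s).2, ?_⟩
  have : (c : A) * (s : A) * f = (c : A) * a := by rw [← hc]; ring
  rw [this]
  exact Ideal.mul_mem_left _ _ ha

lemma pderiv_mem_pow {R σ : Type*} [CommRing R] [DecidableEq σ]
    (I : Ideal (MvPolynomial σ R)) (i : σ) :
    ∀ n, ∀ g ∈ I ^ (n + 1), pderiv i g ∈ I ^ n := by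
  intro n
  induction n with
  | zero => intro g _; simp [Ideal.one_eq_top]
  | succ n ih =>
    intro g hg
    rw [pow_succ] at hg
    refine Submodule.mul_induction_on hg ?_ ?_
    · intro a ha b hb
      rw [pderiv_mul, pow_succ]
      exact Ideal.add_mem _ (Ideal.mul_mem_mul (ih a ha) hb)
        (Ideal.mul_mem_right _ _ (pow_succ I n ▸ ha))
    · intro x y hx hy
      rw [map_add]
      exact Ideal.add_mem _ hx hy

lemma eval_one_eq_zero_of_mem {K : Type*} [Field K] {g : MvPolynomial (Fin 3) K}
    (hg : g ∈ pIdeal K 5 103 169) : eval (fun _ => (1 : K)) g = 0 := by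
  have h0 : toPoly K 5 103 169 g = 0 := hg
  have hcomp : (Polynomial.aeval (1 : K)).comp (toPoly K 5 103 169)
      = aeval (fun _ => (1 : K)) := by
    rw [toPoly, MvPolynomial.comp_aeval]
    congr 1
    funext i
    fin_cases i <;> simp
  have := congrArg (fun φ : MvPolynomial (Fin 3) K →ₐ[K] K => φ g) hcomp
  simp only [AlgHom.comp_apply, h0, map_zero] at this
  rw [← MvPolynomial.coe_aeval_eq_eval]
  exact this.symm

lemma derivs_mem {R σ : Type*} [CommRing R] [DecidableEq σ]
    (P : Ideal (MvPolynomial σ R)) (hP : P.IsPrime) {s f : MvPolynomial σ R}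
    (hs : s ∉ P) (h : s * f ∈ P ^ 3) :
    f ∈ P ∧ (∀ i, pderiv i f ∈ P) ∧
      (∀ i j, pderiv j (pderiv i f) ∈ P) := by
  have hf : f ∈ P := by
    have : s * f ∈ P := Ideal.pow_le_self (by norm_num) h
    exact (hP.mem_or_mem this).resolve_left hs
  have h1 : ∀ i, pderiv i f ∈ P := by
    intro i
    have key : pderiv i (s * f) ∈ P ^ 2 := pderiv_mem_pow P i 2 _ h
    have key' : pderiv i s * f + s * pderiv i f ∈ P := by
      rw [← pderiv_mul]; exact Ideal.pow_le_self (by norm_num) key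
    have h2 : s * pderiv i f ∈ P := by
      have := P.sub_mem key' (Ideal.mul_mem_left _ (pderiv i s) hf)
      simpa using this
    exact (hP.mem_or_mem h2).resolve_left hs
  refine ⟨hf, h1, fun i j => ?_⟩
  have key : pderiv j (pderiv i (s * f)) ∈ P := by
    have := pderiv_mem_pow P j 1 _ (pderiv_mem_pow P i 2 _ h)
    simpa using this
  rw [pderiv_mul, map_add, pderiv_mul, pderiv_mul] at key
  -- key : (∂j∂i s * f + ∂i s * ∂j f) + (∂j s * ∂i f + s * ∂j∂i f) ∈ P
  have hA : pderiv j (pderiv i s) * f ∈ P := Ideal.mul_mem_left _ _ hf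
  
  have hB : pderiv i s * pderiv j f ∈ P := Ideal.mul_mem_left _ _ (h1 j)
  have hC : pderiv j s * pderiv i f ∈ P := Ideal.mul_mem_left _ _ (h1 i)
  have h2 : s * pderiv j (pderiv i f) ∈ P := by
    have := P.sub_mem (P.sub_mem (P.sub_mem key hA) hB) hC
    convert this using 1
    ring
  exact (hP.mem_or_mem h2).resolve_left hs

def xv : Fin 6 → ℕ := ![95, 123, 20, 48, 76, 1]
def yv : Fin 6 → ℕ := ![4, 1, 6, 3, 0, 2]
def zv : Fin 6 → ℕ := ![0, 1, 1, 2, 3, 4]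

def mu (k : Fin 6) : Fin 3 →₀ ℕ :=
  Finsupp.single 0 (xv k) + Finsupp.single 1 (yv k) + Finsupp.single 2 (zv k)

lemma mu_apply0 (k : Fin 6) : mu k 0 = xv k := by
  simp [mu, Finsupp.single_apply]
lemma mu_apply1 (k : Fin 6) : mu k 1 = yv k := by
  simp [mu, Finsupp.single_apply]
lemma mu_apply2 (k : Fin 6) : mu k 2 = zv k := by
  simp [mu, Finsupp.single_apply]

lemma mu_injective : Function.Injective mu := by
  intro i j h
  have h0 : xv i = xv j := by rw [← mu_apply0, ← mu_apply0, h]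
  have : Function.Injective xv := by decide
  exact this h0

lemma weight_eq (m : Fin 3 →₀ ℕ) :
    Finsupp.weight (wt 5 103 169) m = 5 * m 0 + 103 * m 1 + 169 * m 2 := by
  rw [Finsupp.weight_apply, Finsupp.sum_fintype]
  · rw [Fin.sum_univ_three]
    simp [wt]
    ring
  · intro i; simp

lemma enum {m : Fin 3 →₀ ℕ} (h : Finsupp.weight (wt 5 103 169) m = 887) :
    ∃ k : Fin 6, m = mu k := by
  rw [weight_eq] at h
  have gen : ∀ a b c : ℕ, 5*a+103*b+169*c = 887 →
      (a = 95 ∧ b = 4 ∧ c = 0) ∨ (a = 123 ∧ b = 1 ∧ c = 1) ∨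
      (a = 20 ∧ b = 6 ∧ c = 1) ∨ (a = 48 ∧ b = 3 ∧ c = 2) ∨
      (a = 76 ∧ b = 0 ∧ c = 3) ∨ (a = 1 ∧ b = 2 ∧ c = 4) := by
    intro a b c h
    have hc : c ≤ 5 := by omega
    have hb : b ≤ 8 := by omega
    interval_cases c <;> interval_cases b <;> omega
  have key := gen (m 0) (m 1) (m 2) h
  have ext3 : ∀ k : Fin 6, m 0 = xv k → m 1 = yv k → m 2 = zv k → m = mu k := by
    intro k e0 e1 e2
    ext i
    fin_cases i
    · exact e0.trans (mu_apply0 k).symm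
    · exact e1.trans (mu_apply1 k).symm
    · exact e2.trans (mu_apply2 k).symm
  rcases key with ⟨e0,e1,e2⟩|⟨e0,e1,e2⟩|⟨e0,e1,e2⟩|⟨e0,e1,e2⟩|⟨e0,e1,e2⟩|⟨e0,e1,e2⟩
  · exact ⟨0, ext3 0 e0 e1 e2⟩
  · exact ⟨1, ext3 1 e0 e1 e2⟩
  · exact ⟨2, ext3 2 e0 e1 e2⟩
  · exact ⟨3, ext3 3 e0 e1 e2⟩
  · exact ⟨4, ext3 4 e0 e1 e2⟩
  · exact ⟨5, ext3 5 e0 e1 e2⟩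

lemma decomp {K : Type*} [Field K] {f : MvPolynomial (Fin 3) K}
    (hf : f ∈ weightedHomogeneousSubmodule K (wt 5 103 169) 887) :
    f = ∑ k : Fin 6, monomial (mu k) (coeff (mu k) f) := by
  rw [mem_weightedHomogeneousSubmodule] at hf
  have hsub : f.support ⊆ Finset.univ.image mu := by
    intro m hm
    rw [MvPolynomial.mem_support_iff] at hm
    obtain ⟨k, hk⟩ := enum (hf hm)
    exact Finset.mem_image.mpr ⟨k, Finset.mem_univ k, hk.symm⟩
  calc f = ∑ m ∈ f.support, monomial m (coeff m f) := f.as_sum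
    _ = ∑ m ∈ Finset.univ.image mu, monomial m (coeff m f) := by
        refine Finset.sum_subset hsub (fun m _ hm => ?_)
        rw [MvPolynomial.notMem_support_iff] at hm
        rw [hm, map_zero]
    _ = ∑ k : Fin 6, monomial (mu k) (coeff (mu k) f) := by
        rw [Finset.sum_image (fun i _ j _ h => mu_injective h)]

lemma weight_mu (k : Fin 6) : Finsupp.weight (wt 5 103 169) (mu k) = 887 := by
  rw [weight_eq, mu_apply0, mu_apply1, mu_apply2]
  fin_cases k <;> decide

lemma part1 (K : Type*) [Field K] :
    Module.finrank K (weightedHomogeneousSubmodule K (wt 5 103 169) 887) = 6 := by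
  have hspan : weightedHomogeneousSubmodule K (wt 5 103 169) 887
      = Submodule.span K (Set.range fun k : Fin 6 => (monomial (mu k) (1 : K))) := by
    apply le_antisymm
    · intro f hf
      rw [decomp hf]
      refine Submodule.sum_mem _ (fun k _ => ?_)
      have : monomial (mu k) (coeff (mu k) f) = coeff (mu k) f • monomial (mu k) (1 : K) := by
        rw [MvPolynomial.smul_monomial, smul_eq_mul, mul_one]
      rw [this]
      exact Submodule.smul_mem _ _ (Submodule.subset_span ⟨k, rfl⟩)
    · rw [Submodule.span_le]
      rintro _ ⟨k, rfl⟩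
      exact isWeightedHomogeneous_monomial _ _ _ (weight_mu k)
  rw [hspan]
  have hli : LinearIndependent K (fun k : Fin 6 => (monomial (mu k) (1 : K))) := by
    have := (MvPolynomial.basisMonomials (Fin 3) K).linearIndependent.comp mu mu_injective
    simp only [MvPolynomial.coe_basisMonomials] at this
    exact this
  rw [finrank_span_eq_card hli, Fintype.card_fin]

section funcs
variable {K : Type*} [Field K] (a : Fin 6 → K)

local notation "simpset" => 0

lemma E0 : eval (fun _ => (1:K)) (∑ k : Fin 6, monomial (mu k) (a k)) =
    a 0 + a 1 + a 2 + a 3 + a 4 + a 5 := by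
  simp [mu, xv, yv, zv, eval_monomial, Finsupp.single_apply,
    Fin.sum_univ_six, Finsupp.prod, Matrix.cons_val_succ,
    show (![95,123,20,48,76,1] : Fin 6 → ℕ) 5 = 1 from rfl,
    show (![4,1,6,3,0,2] : Fin 6 → ℕ) 5 = 2 from rfl,
    show (![0,1,1,2,3,4] : Fin 6 → ℕ) 5 = 4 from rfl]

lemma E1 : eval (fun _ => (1:K)) (pderiv 0 (∑ k : Fin 6, monomial (mu k) (a k))) =
    95*a 0 + 123*a 1 + 20*a 2 + 48*a 3 + 76*a 4 + a 5 := by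
  simp [mu, xv, yv, zv, pderiv_monomial, eval_monomial, Finsupp.single_apply,
    Finsupp.tsub_apply, Fin.sum_univ_six, Finsupp.prod, Matrix.cons_val_succ,
    show (![95,123,20,48,76,1] : Fin 6 → ℕ) 5 = 1 from rfl,
    show (![4,1,6,3,0,2] : Fin 6 → ℕ) 5 = 2 from rfl,
    show (![0,1,1,2,3,4] : Fin 6 → ℕ) 5 = 4 from rfl]
  ring

lemma E2 : eval (fun _ => (1:K)) (pderiv 1 (∑ k : Fin 6, monomial (mu k) (a k))) =
    4*a 0 + a 1 + 6*a 2 + 3*a 3 + 2*a 5 := by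
  simp [mu, xv, yv, zv, pderiv_monomial, eval_monomial, Finsupp.single_apply,
    Finsupp.tsub_apply, Fin.sum_univ_six, Finsupp.prod, Matrix.cons_val_succ,
    show (![95,123,20,48,76,1] : Fin 6 → ℕ) 5 = 1 from rfl,
    show (![4,1,6,3,0,2] : Fin 6 → ℕ) 5 = 2 from rfl,
    show (![0,1,1,2,3,4] : Fin 6 → ℕ) 5 = 4 from rfl]
  ring

lemma E3 : eval (fun _ => (1:K)) (pderiv 0 (pderiv 0 (∑ k : Fin 6, monomial (mu k) (a k)))) =
    8930*a 0 + 15006*a 1 + 380*a 2 + 2256*a 3 + 5700*a 4 := by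
  simp [mu, xv, yv, zv, pderiv_monomial, eval_monomial, Finsupp.single_apply,
    Finsupp.tsub_apply, Fin.sum_univ_six, Finsupp.prod, Matrix.cons_val_succ,
    show (![95,123,20,48,76,1] : Fin 6 → ℕ) 5 = 1 from rfl,
    show (![4,1,6,3,0,2] : Fin 6 → ℕ) 5 = 2 from rfl,
    show (![0,1,1,2,3,4] : Fin 6 → ℕ) 5 = 4 from rfl]
  ring

lemma E4 : eval (fun _ => (1:K)) (pderiv 1 (pderiv 0 (∑ k : Fin 6, monomial (mu k) (a k)))) =
    380*a 0 + 123*a 1 + 120*a 2 + 144*a 3 + 2*a 5 := by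
  simp [mu, xv, yv, zv, pderiv_monomial, eval_monomial, Finsupp.single_apply,
    Finsupp.tsub_apply, Fin.sum_univ_six, Finsupp.prod, Matrix.cons_val_succ,
    show (![95,123,20,48,76,1] : Fin 6 → ℕ) 5 = 1 from rfl,
    show (![4,1,6,3,0,2] : Fin 6 → ℕ) 5 = 2 from rfl,
    show (![0,1,1,2,3,4] : Fin 6 → ℕ) 5 = 4 from rfl]
  ring

lemma E5 : eval (fun _ => (1:K)) (pderiv 1 (pderiv 1 (∑ k : Fin 6, monomial (mu k) (a k)))) =
    12*a 0 + 30*a 2 + 6*a 3 + 2*a 5 := by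
  simp [mu, xv, yv, zv, pderiv_monomial, eval_monomial, Finsupp.single_apply,
    Finsupp.tsub_apply, Fin.sum_univ_six, Finsupp.prod, Matrix.cons_val_succ,
    show (![95,123,20,48,76,1] : Fin 6 → ℕ) 5 = 1 from rfl,
    show (![4,1,6,3,0,2] : Fin 6 → ℕ) 5 = 2 from rfl,
    show (![0,1,1,2,3,4] : Fin 6 → ℕ) 5 = 4 from rfl]
  ring

end funcs


end StatementAux

/-- for char-`0` `K`, with `deg x = 5`, `deg y = 103`,
`deg z = 169`, one has `dim_K S_{887} = 6` and `[𝔭_K(5,103,169)^{(3)}]_{887} = 0`. -/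
theorem statement15 (K : Type*) [Field K] [CharZero K] :
    Module.finrank K (weightedHomogeneousSubmodule K (wt 5 103 169) 887) = 6 ∧
    gpiece K 5 103 169 (symbPow (pIdeal K 5 103 169) 3) 887 = ⊥ := by
  refine ⟨part1 K, ?_⟩
  rw [eq_bot_iff]
  rintro f ⟨hf1, hf2⟩
  obtain ⟨s, hs, hsf⟩ := exists_mul_mem_of_mem_symbPow _ hf1
  obtain ⟨h00, hd1, hd2⟩ := derivs_mem _ (pIdeal_isPrime K 5 103 169) hs hsf
  have hfe : f = ∑ k : Fin 6, monomial (mu k) (coeff (mu k) f) := decomp hf2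
  set a : Fin 6 → K := fun k => coeff (mu k) f with ha
  have H0 := eval_one_eq_zero_of_mem h00
  have H1 := eval_one_eq_zero_of_mem (hd1 0)
  have H2 := eval_one_eq_zero_of_mem (hd1 1)
  have H3 := eval_one_eq_zero_of_mem (hd2 0 0)
  have H4 := eval_one_eq_zero_of_mem (hd2 0 1)
  have H5 := eval_one_eq_zero_of_mem (hd2 1 1)
  rw [hfe, E0] at H0
  rw [hfe] at H1 H2 H3 H4 H5
  rw [E1] at H1
  rw [E2] at H2
  rw [E3] at H3
  rw [E4] at H4
  rw [E5] at H5
  have ha0 : a 0 = 0 := by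
    linear_combination (27930/28561 : K)*H0 - (480/28561 : K)*H1 - (15630/28561 : K)*H2
      + (3/57122 : K)*H3 + (197/28561 : K)*H4 + (1708/28561 : K)*H5
  have ha1 : a 1 = 0 := by
    linear_combination (-21204/28561 : K)*H0 + (54/28561 : K)*H1 + (12004/28561 : K)*H2
      + (3/28561 : K)*H3 - (113/28561 : K)*H4 - (1316/28561 : K)*H5
  have ha2 : a 2 = 0 := by
    linear_combination (-3534/28561 : K)*H0 + (9/28561 : K)*H1 + (705/28561 : K)*H2
      + (1/57122 : K)*H3 - (47/28561 : K)*H4 + (2209/57122 : K)*H5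
  have ha3 : a 3 = 0 := by
    linear_combination (-53276/28561 : K)*H0 + (1226/28561 : K)*H1 + (30521/28561 : K)*H2
      - (7/28561 : K)*H3 - (187/28561 : K)*H4 - (4309/28561 : K)*H5
  have ha4 : a 4 = 0 := by
    linear_combination (33387/28561 : K)*H0 + (124/28561 : K)*H1 - (19242/28561 : K)*H2
      - (5/57122 : K)*H3 + (66/28561 : K)*H4 + (4841/57122 : K)*H5
  have ha5 : a 5 = 0 := by
    linear_combination (45258/28561 : K)*H0 - (933/28561 : K)*H1 - (8358/28561 : K)*H2
      + (9/57122 : K)*H3 + (84/28561 : K)*H4 + (392/28561 : K)*H5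
  rw [Submodule.mem_bot, hfe, Fin.sum_univ_six]
  have hc : ∀ k, coeff (mu k) f = a k := fun k => rfl
  rw [hc 0, hc 1, hc 2, hc 3, hc 4, hc 5, ha0, ha1, ha2, ha3, ha4, ha5]
  simp
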